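/- Let (U,V) be a 2-separation of a connected matroid M that has no series pairs and no parallel pairs. Then (fcl(U), V − fcl(U)) is also a 2-separation of M, where fcl denotes the full closure. -/

import Mathlib

open Set

namespace PaperDefs

variable {α : Type*}

/-- The rank of a set `X` in a matroid `M`, as an extended natural number:
the supremum of the cardinalities of independent subsets of `X`. -/
noncomputable def eRk (M : Matroid α) (X : Set α) : ℕ∞ :=
  ⨆ I ∈ {I | M.Indep I ∧ I ⊆ X}, I.encard

/-- Deletion of a set of elements from a matroid. -/
def del (M : Matroid α) (D : Set α) : Matroid α := M.restrict (M.E \ D)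

/-- Contraction of a set of elements in a matroid. -/
def con (M : Matroid α) (C : Set α) : Matroid α := (del M✶ C)✶

/-- A circuit: a minimal dependent set. -/
def Circuit (M : Matroid α) (C : Set α) : Prop :=
  M.Dep C ∧ ∀ D, D ⊂ C → M.Indep D

/-- A `k`-separation of `M`: a partition `(X, M.E \ X)` with connectivity
`λ(X) = r(X) + r(E−X) − r(M)` at most `k − 1`, and both sides of size at least `k`. -/
def kSeparation (M : Matroid α) (X : Set α) (k : ℕ) : Prop :=
  X ⊆ M.E ∧ eRk M X + eRk M (M.E \ X) ≤ eRk M M.E + ((k - 1 : ℕ) : ℕ∞) ∧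
    (k : ℕ∞) ≤ X.encard ∧ (k : ℕ∞) ≤ (M.E \ X).encard

/-- `M` is `n`-connected if it has no `k`-separations for `0 < k < n`. -/
def NConnected (M : Matroid α) (n : ℕ) : Prop :=
  ∀ k : ℕ, 0 < k → k < n → ∀ X : Set α, ¬ kSeparation M X k

/-- `X` is 3-separating in `M`: `λ_M(X) ≤ 2`. -/
def ThreeSeparating (M : Matroid α) (X : Set α) : Prop :=
  eRk M X + eRk M (M.E \ X) ≤ eRk M M.E + 2

/-- `X` is exactly 3-separating in `M`: `λ_M(X) = 2`. -/
def ExactlyThreeSeparating (M : Matroid α) (X : Set α) : Prop :=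
  eRk M X + eRk M (M.E \ X) = eRk M M.E + 2

/-- `N` is a simplification of `M`: `N` is obtained from `M` by deleting a set of
elements, `N` has no loops or parallel pairs (no circuits of size at most two), and
every element of `M` is in the closure of the ground set of `N`. -/
def IsSimplificationOf (N M : Matroid α) : Prop :=
  (∃ D ⊆ M.E, N = del M D) ∧ (∀ C, Circuit N C → 3 ≤ C.encard) ∧
    M.closure N.E = M.E

/-- `N` is a cosimplification of `M`: `N✶` is a simplification of `M✶`. -/
def IsCosimplificationOf (N M : Matroid α) : Prop :=
  IsSimplificationOf N✶ M✶

/-- `S` is a series class of `M`: a maximal nonempty set any two distinct elements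
of which form a series pair (a two-element cocircuit). -/
def IsSeriesClass (M : Matroid α) (S : Set α) : Prop :=
  S.Nonempty ∧ S ⊆ M.E ∧ (∀ a ∈ S, ∀ b ∈ S, a ≠ b → Circuit M✶ {a, b}) ∧
    (∀ a ∈ S, ∀ f, Circuit M✶ {a, f} → a ≠ f → f ∈ S)

/-- The full closure of `X` in `M`: the intersection of all sets containing `X ∩ M.E`
that are closed in both `M` and `M✶`. -/
def fullClosure (M : Matroid α) (X : Set α) : Set α :=
  ⋂₀ {F | X ∩ M.E ⊆ F ∧ M.closure F = F ∧ M✶.closure F = F}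

end PaperDefs

open PaperDefs

namespace Aux
variable {α : Type*} {M : Matroid α} {X Y I A Z : Set α} {e a b : α}

lemma encard_le_eRk (hI : M.Indep I) (hIX : I ⊆ X) : I.encard ≤ eRk M X := by
  exact le_iSup₂_of_le I ⟨hI, hIX⟩ le_rfl

lemma eRk_eq_encard (hI : M.IsBasis' I X) : eRk M X = I.encard := by
  refine le_antisymm (iSup₂_le fun J hJ => ?_) (encard_le_eRk hI.indep hI.subset)
  obtain ⟨J', hJ', hJJ'⟩ := hJ.1.subset_isBasis'_of_subset hJ.2
  rw [← hJ'.encard_eq_encard hI]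
  exact encard_mono hJJ'

lemma eRk_mono (h : X ⊆ Y) : eRk M X ≤ eRk M Y :=
  iSup₂_le fun _ hJ => encard_le_eRk hJ.1 (hJ.2.trans h)

lemma eRk_le_encard (M : Matroid α) (X : Set α) : eRk M X ≤ X.encard :=
  iSup₂_le fun _ hJ => encard_mono hJ.2

lemma Indep_eRk (hI : M.Indep I) : eRk M I = I.encard :=
  eRk_eq_encard hI.isBasis_self.isBasis'

lemma eRk_closure (M : Matroid α) (X : Set α) : eRk M (M.closure X) = eRk M X := by
  obtain ⟨I, hI⟩ := M.exists_isBasis' X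
  rw [eRk_eq_encard hI, eRk_eq_encard hI.isBasis_closure_right.isBasis']

lemma eRk_union_le (M : Matroid α) (X Y : Set α) : eRk M (X ∪ Y) ≤ eRk M X + eRk M Y := by
  obtain ⟨I, hI⟩ := M.exists_isBasis' (X ∪ Y)
  rw [eRk_eq_encard hI, ← inter_union_diff I X]
  refine (encard_union_le _ _).trans (add_le_add ?_ ?_)
  · exact encard_le_eRk (hI.indep.subset inter_subset_left) inter_subset_right
  · exact encard_le_eRk (hI.indep.subset diff_subset)
      (fun x hx => (hI.subset hx.1).elim (fun h => absurd h hx.2) id)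

/-- rank bump when adding a non-spanned element -/
lemma eRk_insert_bump (hX : X ⊆ M.E) (heE : e ∈ M.E) (he : e ∉ M.closure X) :
    eRk M X + 1 ≤ eRk M (insert e X) := by
  obtain ⟨I, hI⟩ := M.exists_isBasis X hX
  have hcl : M.closure I = M.closure X := hI.closure_eq_closure
  have heI : e ∉ I := fun h => he (hcl ▸ M.subset_closure I hI.indep.subset_ground h)
  have hind : M.Indep (insert e I) := by
    rw [hI.indep.insert_indep_iff_of_notMem heI, hcl]
    exact ⟨heE, he⟩
  rw [eRk_eq_encard hI.isBasis', ← encard_insert_of_notMem heI]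
  exact encard_le_eRk hind (insert_subset_insert hI.subset)

/-- a dual/primal closure clash -/
lemma not_closure_both (hX : X ⊆ M.E) (heX : e ∉ X) (h1 : e ∈ M.closure X)
    (h2 : e ∈ M✶.closure ((M.E \ X) \ {e})) : False := by
  have heE : e ∈ M.E := M.closure_subset_ground X h1
  set Y := (M.E \ X) \ {e} with hY
  have hYE : Y ⊆ M✶.E := by rw [Matroid.dual_ground]; exact diff_subset.trans diff_subset
  obtain ⟨J, hJ⟩ := M✶.exists_isBasis Y hYE
  have heJ : e ∉ J := fun h => (hJ.subset h).2 rfl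
  have hdep : M✶.Dep (insert e J) := by
    rw [hJ.indep.insert_dep_iff]
    exact ⟨hJ.closure_eq_closure ▸ h2, heJ⟩
  -- J is coindependent in M, so there is a base avoiding J
  have hco : M.Coindep J := hJ.indep
  obtain ⟨B, hB, hBJ⟩ := (Matroid.coindep_iff_exists (show J ⊆ M.E from hJ.indep.subset_ground)).mp hco
  -- S = (M.E \ J) \ {e} is spanning
  set S := (M.E \ J) \ {e} with hS
  have hSE : S ⊆ M.E := diff_subset.trans diff_subset
  have hXS : X ⊆ S := by
    intro x hx
    refine ⟨⟨hX hx, fun hxJ => ((hJ.subset hxJ).1).2 hx⟩, fun hxe => heX (hxe ▸ hx)⟩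
  have hBS : B ⊆ M.closure S := by
    intro x hx
    by_cases hxe : x = e
    · exact hxe ▸ (M.closure_subset_closure hXS h1)
    · exact M.subset_closure S hSE ⟨⟨hB.subset_ground hx, fun h => (hBJ hx).2 h⟩, hxe⟩
  have hSsp : M.Spanning S := by
    rw [Matroid.spanning_iff_closure_eq hSE]
    refine subset_antisymm (M.closure_subset_ground S) ?_
    calc M.E = M.closure B := (hB.closure_eq).symm
    _ ⊆ M.closure (M.closure S) := M.closure_subset_closure hBS
    _ = M.closure S := M.closure_closure S
  obtain ⟨B', hB', hB'S⟩ := (Matroid.spanning_iff_exists_isBase_subset hSE).mp hSsp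
  have : M✶.Indep (insert e J) := by
    rw [← Matroid.coindep_def]
    refine (Matroid.coindep_iff_exists (show insert e J ⊆ M.E from insert_subset heE (hJ.indep.subset_ground))).mpr ⟨B', hB', fun x hx => ?_⟩
    obtain ⟨⟨hxE, hxJ⟩, hxe⟩ := hB'S hx
    refine ⟨hxE, ?_⟩
    simp only [mem_insert_iff, not_or]
    exact ⟨fun h => hxe (by simp [h]), hxJ⟩
  exact hdep.not_indep this

/-- rank additivity for a "cospanning-free" set Z -/
lemma eRk_diff_add_encard_le (hA : A ⊆ M.E) (hZA : Z ⊆ A) (hfin : eRk M M.E ≠ ⊤)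
    (hZ : ∀ e ∈ Z, e ∉ M.closure (A \ {e})) :
    eRk M (A \ Z) + Z.encard ≤ eRk M A := by
  have hZE : Z ⊆ M.E := hZA.trans hA
  have hZind : M.Indep Z := by
    rw [Matroid.indep_iff_forall_notMem_closure_diff hZE]
    exact fun x hx hmem => hZ x hx (M.closure_subset_closure
      (diff_subset_diff_left hZA) hmem)
  have hZfin : Z.Finite := by
    rw [← encard_ne_top_iff]
    exact fun h => hfin (top_le_iff.mp (h ▸ encard_le_eRk hZind hZE))
  obtain ⟨I, hI⟩ := M.exists_isBasis (A \ Z) (diff_subset.trans hA)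
  have hIZind : M.Indep (I ∪ Z) := by
    refine Set.Finite.induction_on_subset (motive := fun s _ => M.Indep (I ∪ s)) Z hZfin
      (by simpa using hI.indep) ?_
    intro x t hxZ htZ hxt hind
    have hxI : x ∉ I ∪ t := by
      rintro (h | h)
      · exact (hI.subset h).2 hxZ
      · exact hxt h
    have hsub : I ∪ t ⊆ A \ {x} :=
      union_subset (hI.subset.trans (diff_subset_diff_right (singleton_subset_iff.mpr hxZ)))
        (fun y hy => ⟨hZA (htZ hy), fun hyx => hxt (hyx ▸ hy)⟩)
    have : M.Indep (insert x (I ∪ t)) := by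
      rw [hind.insert_indep_iff_of_notMem hxI]
      exact ⟨hZE hxZ, fun h => hZ x hxZ (M.closure_subset_closure hsub h)⟩
    rwa [union_insert]
  have hdisj : Disjoint I Z := disjoint_of_subset_left hI.subset disjoint_sdiff_left
  rw [eRk_eq_encard hI.isBasis', ← encard_union_eq hdisj]
  exact encard_le_eRk hIZind (union_subset (hI.subset.trans diff_subset) hZA)

/-- two nonloops spanning rank ≤ 1 form a circuit -/
lemma pair_circuit (_hne : a ≠ b) (ha : M.Indep {a}) (hb : M.Indep {b})
    (hdep : M.Dep {a, b}) : PaperDefs.Circuit M {a, b} := by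
  refine ⟨hdep, fun D hD => ?_⟩
  by_cases haD : a ∈ D
  · have hbD : b ∉ D := by
      intro hbD
      exact hD.ne (subset_antisymm hD.subset (insert_subset haD (by simpa using hbD)))
    refine ha.subset fun x hx => ?_
    rcases hD.subset hx with h | h
    · exact h
    · exact absurd (h ▸ hx) hbD
  · refine hb.subset fun x hx => ?_
    rcases hD.subset hx with h | h
    · exact absurd (h ▸ hx) haD
    · exact h

end Aux

namespace Aux

variable {α : Type*}

/-- the alternating closure chain -/
def chain (M : Matroid α) (U : Set α) : ℕ → Set α
  | 0 => U
  | n + 1 => M✶.closure (M.closure (chain M U n))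

end Aux

open Aux

/-- If `(U,V)` is a 2-separation of a connected matroid `M` with no
series or parallel pairs, then `(fcl(U), V − fcl(U))` is also a 2-separation of `M`. -/
theorem statement_8 {α : Type*} (M : Matroid α) (U V : Set α)
    (hconn : NConnected M 2)
    (hnopar : ∀ a b : α, a ≠ b → ¬ Circuit M {a, b})
    (hnoser : ∀ a b : α, a ≠ b → ¬ Circuit M✶ {a, b})
    (hu : U ∪ V = M.E) (hd : Disjoint U V) (hsep : kSeparation M U 2) :
    kSeparation M (fullClosure M U) 2 ∧
      M.E \ fullClosure M U = V \ fullClosure M U := by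
  classical
  obtain ⟨hUE, hlam0, hU2, hV2⟩ := hsep
  have hcast : ((2 - 1 : ℕ) : ℕ∞) = 1 := by norm_num
  have hlam : eRk M U + eRk M (M.E \ U) ≤ eRk M M.E + 1 := by rwa [hcast] at hlam0
  have hE2 : (1 : ℕ∞) < M.E.encard :=
    lt_of_lt_of_le (by norm_num) (le_trans hU2 (encard_mono hUE))
  have h1sep : ∀ X : Set α, ¬ kSeparation M X 1 := hconn 1 one_pos one_lt_two
  have hcompl : ∀ e : α, (M.E \ {e}).Nonempty := by
    intro e
    obtain ⟨b, hb, hbe⟩ := Set.exists_ne_of_one_lt_encard hE2 e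
    exact ⟨b, hb, hbe⟩
  have hzero : ((1 - 1 : ℕ) : ℕ∞) = 0 := by norm_num
  have hfin : eRk M M.E ≠ ⊤ := by
    intro h
    refine h1sep U ⟨hUE, ?_, le_trans (by norm_num) hU2, le_trans (by norm_num) hV2⟩
    rw [hzero, add_zero, h]
    exact le_top
  have noLoop : ∀ e ∈ M.E, M.Indep {e} := by
    intro e he
    by_contra hdep
    obtain ⟨B, hB⟩ := M.exists_isBase
    have heB : e ∉ B := fun h => hdep (hB.indep.subset (by simpa using h))
    have hBsub : B ⊆ M.E \ {e} := subset_diff_singleton hB.subset_ground heB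
    have hclE : M.closure (M.E \ {e}) = M.E := by
      refine subset_antisymm (M.closure_subset_ground _) ?_
      calc M.E = M.closure B := hB.closure_eq.symm
      _ ⊆ M.closure (M.E \ {e}) := M.closure_subset_closure hBsub
    have her : eRk M (M.E \ {e}) = eRk M M.E := by
      rw [← eRk_closure M (M.E \ {e}), hclE]
    have her0 : eRk M {e} = 0 := by
      refine le_antisymm (iSup₂_le fun J hJ => ?_) (zero_le)
      rcases subset_singleton_iff_eq.mp hJ.2 with rfl | rfl
      · simp
      · exact absurd hJ.1 hdep
    refine h1sep {e} ⟨by simpa using he, ?_, by simp, ?_⟩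
    · rw [her0, zero_add, her, hzero, add_zero]
    · simpa [Set.one_le_encard_iff_nonempty] using hcompl e
  have noColoop : ∀ e ∈ M.E, e ∈ M.closure (M.E \ {e}) := by
    intro e he
    by_contra hecl
    have h1 : eRk M (M.E \ {e}) + 1 ≤ eRk M M.E := by
      have := eRk_insert_bump (M := M) diff_subset he hecl
      rwa [insert_diff_singleton, insert_eq_of_mem he] at this
    refine h1sep {e} ⟨by simpa using he, ?_, by simp,
      by simpa [Set.one_le_encard_iff_nonempty] using hcompl e⟩
    rw [hzero, add_zero]
    calc eRk M {e} + eRk M (M.E \ {e}) ≤ 1 + eRk M (M.E \ {e}) :=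
          add_le_add_left ((eRk_le_encard M {e}).trans (by simp)) _
    _ = eRk M (M.E \ {e}) + 1 := add_comm _ _
    _ ≤ eRk M M.E := h1
  have noPar : ∀ T, T ⊆ M.E → 1 < T.encard → ¬ (eRk M T ≤ 1) := by
    intro T hTE hT2 hrT
    obtain ⟨a, b, ha, hb, hab⟩ := Set.one_lt_encard_iff.mp hT2
    have hpair : ({a, b} : Set α) ⊆ T := insert_subset ha (by simpa using hb)
    have hdep : M.Dep {a, b} := by
      rw [← Matroid.not_indep_iff (hpair.trans hTE)]
      intro hind
      have h2 : (2 : ℕ∞) ≤ eRk M T := by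
        rw [← Set.encard_pair hab, ← Indep_eRk hind]
        exact eRk_mono hpair
      exact absurd (h2.trans hrT) (by norm_num)
    exact hnopar a b hab (pair_circuit hab (noLoop a (hTE ha)) (noLoop b (hTE hb)) hdep)
  have noColoopDual : ∀ e ∈ M.E, e ∈ M✶.closure (M.E \ {e}) := by
    intro e he
    obtain ⟨B, hB, heB⟩ := (noLoop e he).exists_isBase_superset
    have hBd : M✶.IsBase (M.E \ B) := hB.compl_isBase_dual
    have hsub : M.E \ B ⊆ M.E \ {e} := diff_subset_diff_right heB
    have hcl : M✶.closure (M.E \ B) = M.E := hBd.closure_eq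
    have : e ∈ M✶.closure (M.E \ B) := by rw [hcl]; exact he
    exact M✶.closure_subset_closure hsub this
  have hlamtrans : ∀ x : ℕ∞, 1 < x ↔ 2 ≤ x := by
    intro x
    rw [← ENat.add_one_le_iff (by norm_num : (1:ℕ∞) ≠ ⊤)]
    norm_num
  have stepA : ∀ X : Set α, U ⊆ X → X ⊆ M.E →
      eRk M X + eRk M (M.E \ X) ≤ eRk M M.E + 1 → 1 < (M.E \ X).encard →
      (U ⊆ M.closure X ∧ M.closure X ⊆ M.E ∧
       eRk M (M.closure X) + eRk M (M.E \ M.closure X) ≤ eRk M M.E + 1 ∧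
       1 < (M.E \ M.closure X).encard) := by
    intro X hUX hXE hlamX hcard
    have hXcl : X ⊆ M.closure X := M.subset_closure X hXE
    have hclE : M.closure X ⊆ M.E := M.closure_subset_ground X
    have hrcl : eRk M (M.closure X) = eRk M X := eRk_closure M X
    have hlam' : eRk M (M.closure X) + eRk M (M.E \ M.closure X) ≤ eRk M M.E + 1 := by
      rw [hrcl]
      exact le_trans (add_le_add_right (eRk_mono (diff_subset_diff_right hXcl)) _) hlamX
    refine ⟨hUX.trans hXcl, hclE, hlam', ?_⟩
    by_contra hsmall
    push_neg at hsmall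
    rcases Set.encard_le_one_iff_eq.mp hsmall with h0 | ⟨f, hf⟩
    · have hXspan : M.closure X = M.E :=
        subset_antisymm hclE (by rwa [diff_eq_empty] at h0)
      have hrX : eRk M X = eRk M M.E := by rw [← hrcl, hXspan]
      have hsmall2 : eRk M (M.E \ X) ≤ 1 := by
        rw [hrX] at hlamX
        exact (WithTop.add_le_add_iff_left hfin).mp hlamX
      exact noPar (M.E \ X) diff_subset hcard hsmall2
    · have hfmem : f ∈ M.E \ M.closure X := hf ▸ rfl
      have hclXeq : M.closure X = M.E \ {f} := by
        apply subset_antisymm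
        · intro x hx
          refine ⟨hclE hx, fun hxf => hfmem.2 ?_⟩
          rwa [← show x = f from hxf]
        · intro x hx
          by_contra hxcl
          have : x ∈ M.E \ M.closure X := ⟨hx.1, hxcl⟩
          rw [hf] at this
          exact hx.2 this
      have hfc := noColoop f hfmem.1
      rw [← hclXeq, M.closure_closure] at hfc
      exact hfmem.2 hfc
  have stepB : ∀ Y : Set α, U ⊆ Y → Y ⊆ M.E →
      eRk M Y + eRk M (M.E \ Y) ≤ eRk M M.E + 1 → 1 < (M.E \ Y).encard →
      (U ⊆ M✶.closure Y ∧ M✶.closure Y ⊆ M.E ∧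
       eRk M (M✶.closure Y) + eRk M (M.E \ M✶.closure Y) ≤ eRk M M.E + 1 ∧
       1 < (M.E \ M✶.closure Y).encard) := by
    intro Y hUY hYE hlamY hcard
    have hYY' : Y ⊆ M✶.closure Y := M✶.subset_closure Y hYE
    have hY'E : M✶.closure Y ⊆ M.E := M✶.closure_subset_ground Y
    set Y' := M✶.closure Y with hY'def
    set A := M.E \ Y with hAdef
    set Z := Y' \ Y with hZdef
    have hZA : Z ⊆ A := fun x hx => ⟨hY'E hx.1, hx.2⟩
    have hWeq : M.E \ Y' = A \ Z := by
      ext x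
      constructor
      · intro hx
        exact ⟨⟨hx.1, fun hY => hx.2 (hYY' hY)⟩, fun hz => hx.2 hz.1⟩
      · intro hx
        refine ⟨hx.1.1, fun hY' => ?_⟩
        rcases em (x ∈ Y) with h | h
        · exact hx.1.2 h
        · exact hx.2 ⟨hY', h⟩
    have hZprop : ∀ e ∈ Z, e ∉ M.closure (A \ {e}) := by
      intro e heZ hecl
      have heE : e ∈ M.E := hY'E heZ.1
      have hset : (M.E \ (A \ {e})) \ {e} = Y := by
        ext x
        constructor
        · rintro ⟨⟨hxE, hxA⟩, hxe⟩
          by_contra hxY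
          exact hxA ⟨⟨hxE, hxY⟩, hxe⟩
        · intro hxY
          refine ⟨⟨hYE hxY, fun hxA => hxA.1.2 hxY⟩, fun hxe => heZ.2 ?_⟩
          rw [mem_singleton_iff] at hxe
          exact hxe ▸ hxY
      refine not_closure_both (X := A \ {e}) (diff_subset.trans diff_subset)
        (fun h => h.2 rfl) hecl ?_
      rw [hset]
      exact heZ.1
    have hY'union : Y' = Y ∪ Z := by
      rw [hZdef, union_diff_cancel hYY']
    have hrY' : eRk M Y' ≤ eRk M Y + Z.encard := by
      rw [hY'union]
      exact (eRk_union_le M Y Z).trans (add_le_add_right (eRk_le_encard M Z) _)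
    have hK := eRk_diff_add_encard_le (A := A) (Z := Z) diff_subset hZA hfin hZprop
    have hlam' : eRk M Y' + eRk M (M.E \ Y') ≤ eRk M M.E + 1 := by
      rw [hWeq]
      calc eRk M Y' + eRk M (A \ Z)
          ≤ (eRk M Y + Z.encard) + eRk M (A \ Z) := add_le_add_left hrY' _
        _ = eRk M Y + (eRk M (A \ Z) + Z.encard) := by ring
        _ ≤ eRk M Y + eRk M A := add_le_add_right hK _
        _ ≤ eRk M M.E + 1 := hlamY
    refine ⟨hUY.trans hYY', hY'E, hlam', ?_⟩
    by_contra hsmall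
    push_neg at hsmall
    rcases Set.encard_le_one_iff_eq.mp hsmall with h0 | ⟨f, hf⟩
    · -- Y' = E
      have hY'eq : Y' = M.E := subset_antisymm hY'E (by rwa [diff_eq_empty] at h0)
      have hZeqA : Z = A := by
        apply subset_antisymm hZA
        intro x hx
        exact ⟨by rw [hY'eq]; exact hx.1, hx.2⟩
      have hAE : A ⊆ M.E := diff_subset
      have hAind : M.Indep A := by
        rw [Matroid.indep_iff_forall_notMem_closure_diff hAE]
        intro x hx hmem
        exact hZprop x (hZeqA ▸ hx) hmem
      obtain ⟨a, b, ha, hb, hab⟩ := Set.one_lt_encard_iff.mp hcard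
      have haA : a ∈ A := ha
      have hbA : b ∈ A := hb
      have hpairA : ({a, b} : Set α) ⊆ A := insert_subset haA (by simpa using hbA)
      by_cases hsp : M.Spanning (M.E \ {a, b})
      · have h1 : eRk M (M.E \ {a, b}) = eRk M M.E := by
          rw [← eRk_closure M (M.E \ {a, b}), hsp.closure_eq]
        have hdecomp : M.E \ {a, b} = Y ∪ (A \ {a, b}) := by
          ext x
          constructor
          · intro hx
            rcases em (x ∈ Y) with h | h
            · exact Or.inl h
            · exact Or.inr ⟨⟨hx.1, h⟩, hx.2⟩
          · rintro (h | h)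
            · refine ⟨hYE h, fun hx => ?_⟩
              rcases hx with rfl | rfl
              · exact haA.2 h
              · exact hbA.2 h
            · exact ⟨h.1.1, h.2⟩
        have h2 : eRk M M.E ≤ eRk M Y + (A \ {a, b}).encard := by
          rw [← h1, hdecomp]
          exact (eRk_union_le M Y _).trans (add_le_add_right (eRk_le_encard M _) _)
        have h3 : (A \ {a, b}).encard + 2 = A.encard := by
          rw [← Set.encard_pair hab]
          exact Set.encard_diff_add_encard_of_subset hpairA
        have h4 : eRk M A = A.encard := Indep_eRk hAind
        have h5 : eRk M M.E + 2 ≤ eRk M M.E + 1 := by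
          calc eRk M M.E + 2 ≤ (eRk M Y + (A \ {a, b}).encard) + 2 := add_le_add_left h2 _
            _ = eRk M Y + ((A \ {a, b}).encard + 2) := by ring
            _ = eRk M Y + A.encard := by rw [h3]
            _ = eRk M Y + eRk M A := by rw [h4]
            _ ≤ eRk M M.E + 1 := hlamY
        have := (WithTop.add_le_add_iff_left hfin).mp h5
        exact absurd (this : (2:ℕ∞) ≤ 1) (not_le.mpr (by norm_num : (1:ℕ∞) < 2))
      · have hsubE : ({a, b} : Set α) ⊆ M.E := hpairA.trans hAE
        have hdep : M✶.Dep {a, b} := by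
          rw [Matroid.dep_iff]
          refine ⟨fun hind => hsp ?_, by rw [Matroid.dual_ground]; exact hsubE⟩
          have hco : M.Coindep {a, b} := hind
          exact hco.compl_spanning
        have hsd : ∀ c, c ∈ M.E → M✶.Indep {c} := by
          intro c hc
          have hcl : M.closure (M.E \ {c}) = M.E := by
            refine subset_antisymm (M.closure_subset_ground _) fun x hx => ?_
            rcases em (x = c) with rfl | h
            · exact noColoop x hx
            · exact M.subset_closure _ diff_subset ⟨hx, h⟩
          have hsp' : M.Spanning (M.E \ {c}) :=
            (Matroid.spanning_iff_closure_eq diff_subset).mpr hcl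
          exact (Matroid.coindep_iff_compl_spanning (by simpa using hc)).mpr hsp'
        exact hnoser a b hab
          (pair_circuit hab (hsd a (hAE haA)) (hsd b (hAE hbA)) hdep)
    · -- E \ Y' = {f}
      have hfmem : f ∈ M.E \ Y' := hf ▸ rfl
      have hY'eq : Y' = M.E \ {f} := by
        apply subset_antisymm
        · intro x hx
          refine ⟨hY'E hx, fun hxf => hfmem.2 ?_⟩
          rwa [← show x = f from hxf]
        · intro x hx
          by_contra hxY'
          have : x ∈ M.E \ Y' := ⟨hx.1, hxY'⟩
          rw [hf] at this
          exact hx.2 this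
      have hfc := noColoopDual f hfmem.1
      rw [← hY'eq] at hfc
      have : M✶.closure Y' = Y' := by
        rw [hY'def, Matroid.closure_closure]
      rw [this] at hfc
      exact hfmem.2 hfc
  -- the alternating chain
  have hchainS : ∀ k : ℕ, chain M U (k + 1) = M✶.closure (M.closure (chain M U k)) :=
    fun k => rfl
  have hchain0 : chain M U 0 = U := rfl
  have hInv : ∀ k : ℕ, U ⊆ chain M U k ∧ chain M U k ⊆ M.E ∧
      eRk M (chain M U k) + eRk M (M.E \ chain M U k) ≤ eRk M M.E + 1 ∧
      1 < (M.E \ chain M U k).encard := by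
    intro k
    induction k with
    | zero =>
      rw [hchain0]
      exact ⟨subset_rfl, hUE, hlam, lt_of_lt_of_le (by norm_num : (1:ℕ∞) < 2) hV2⟩
    | succ k IH =>
      obtain ⟨h1, h2, h3, h4⟩ := IH
      obtain ⟨a1, a2, a3, a4⟩ := stepA _ h1 h2 h3 h4
      rw [hchainS k]
      exact stepB _ a1 a2 a3 a4
  have hmono : ∀ k : ℕ, chain M U k ⊆ chain M U (k + 1) := by
    intro k
    rw [hchainS k]
    exact (M.subset_closure _ (hInv k).2.1).trans
      (M✶.subset_closure _ (M.closure_subset_ground _))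
  have hne : ∀ k : ℕ, eRk M (chain M U k) ≠ ⊤ := by
    intro k h
    exact hfin (top_le_iff.mp (h ▸ eRk_mono (hInv k).2.1))
  have hstab : ∃ k : ℕ, eRk M (chain M U (k + 1)) = eRk M (chain M U k) := by
    by_contra h
    push_neg at h
    have hstrict : ∀ k : ℕ, eRk M (chain M U k) + 1 ≤ eRk M (chain M U (k + 1)) := by
      intro k
      rw [ENat.add_one_le_iff (hne k)]
      exact lt_of_le_of_ne (eRk_mono (hmono k)) (fun he => h k he.symm)
    have hgrow : ∀ k : ℕ, (k : ℕ∞) ≤ eRk M (chain M U k) := by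
      intro k
      induction k with
      | zero => simp
      | succ k IH =>
        push_cast
        calc (k : ℕ∞) + 1 ≤ eRk M (chain M U k) + 1 := add_le_add IH le_rfl
          _ ≤ _ := hstrict k
    obtain ⟨m, hm⟩ := WithTop.ne_top_iff_exists.mp hfin
    have hle : ((m + 1 : ℕ) : ℕ∞) ≤ (m : ℕ∞) := by
      calc ((m + 1 : ℕ) : ℕ∞) ≤ eRk M (chain M U (m + 1)) := hgrow (m + 1)
        _ ≤ eRk M M.E := eRk_mono (hInv (m + 1)).2.1
        _ = (m : ℕ∞) := hm.symm
    have : m + 1 ≤ m := by exact_mod_cast hle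
    omega
  obtain ⟨n, hn⟩ := hstab
  set F := chain M U (n + 1) with hFdef
  have hFdual : M✶.closure F = F := by
    rw [hFdef, hchainS n, Matroid.closure_closure]
  have hclsub : M.closure (chain M U n) ⊆ F := by
    rw [hFdef, hchainS n]
    exact M✶.subset_closure _ (M.closure_subset_ground _)
  have hFE : F ⊆ M.E := (hInv (n + 1)).2.1
  have hFclosed : M.closure F = F := by
    obtain ⟨I, hI⟩ := M.exists_isBasis (chain M U n) (hInv n).2.1
    have hIF : I ⊆ F := hI.subset.trans (hmono n)
    have hIfin : I.encard ≠ ⊤ := by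
      intro h
      exact hfin (top_le_iff.mp (h ▸ encard_le_eRk hI.indep (hI.indep.subset_ground)))
    have hFsub : F ⊆ M.closure I := by
      intro x hxF
      by_contra hx
      have hxE : x ∈ M.E := hFE hxF
      have hxI : x ∉ I := fun h => hx (M.subset_closure I hI.indep.subset_ground h)
      have hins : M.Indep (insert x I) := by
        rw [hI.indep.insert_indep_iff_of_notMem hxI]
        exact ⟨hxE, hx⟩
      have hreach : I.encard + 1 ≤ eRk M F := by
        rw [← encard_insert_of_notMem hxI]
        exact encard_le_eRk hins (insert_subset hxF hIF)
      have hIe : eRk M F = I.encard := by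
        rw [hFdef, hn, eRk_eq_encard hI.isBasis']
      rw [hIe, ENat.add_one_le_iff hIfin] at hreach
      exact lt_irrefl _ hreach
    refine subset_antisymm ?_ (M.subset_closure F hFE)
    calc M.closure F ⊆ M.closure (M.closure I) := M.closure_subset_closure hFsub
      _ = M.closure I := M.closure_closure I
      _ = M.closure (chain M U n) := hI.closure_eq_closure
      _ ⊆ F := hclsub
  have hUIeq : U ∩ M.E = U := inter_eq_self_of_subset_left hUE
  have hUF : U ⊆ F := (hInv (n + 1)).1
  have hFmem : F ∈ {G | U ∩ M.E ⊆ G ∧ M.closure G = G ∧ M✶.closure G = G} :=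
    ⟨by rw [hUIeq]; exact hUF, hFclosed, hFdual⟩
  have hsub1 : fullClosure M U ⊆ F := sInter_subset_of_mem hFmem
  have hsub2 : F ⊆ fullClosure M U := by
    refine subset_sInter fun G hG => ?_
    obtain ⟨hUG, hGc, hGd⟩ := hG
    have hall : ∀ m : ℕ, chain M U m ⊆ G := by
      intro m
      induction m with
      | zero => rw [hchain0, ← hUIeq]; exact hUG
      | succ m IH =>
        rw [hchainS m]
        calc M✶.closure (M.closure (chain M U m)) ⊆ M✶.closure (M.closure G) := by
              exact M✶.closure_subset_closure (M.closure_subset_closure IH)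
          _ = G := by rw [hGc, hGd]
    exact hall (n + 1)
  have hFeq : fullClosure M U = F := subset_antisymm hsub1 hsub2
  constructor
  · rw [hFeq]
    refine ⟨hFE, ?_, le_trans hU2 (encard_mono hUF), ?_⟩
    · rw [hcast]
      exact (hInv (n + 1)).2.2.1
    · exact (hlamtrans _).mp (hInv (n + 1)).2.2.2
  · rw [hFeq]
    apply subset_antisymm
    · intro x hx
      have hxV : x ∈ V := by
        have : x ∈ U ∪ V := hu ▸ hx.1
        rcases this with h | h
        · exact absurd (hUF h) hx.2
        · exact h
      exact ⟨hxV, hx.2⟩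
    · intro x hx
      refine ⟨?_, hx.2⟩
      rw [← hu]
      exact Or.inr hx.1
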